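/- Let M(x) = A₀ + x₁A₁ + ⋯ + xₙAₙ be a linear matrix polynomial of size d with complex d×d coefficient matrices. Fix exponents k₁,…,kₙ ∈ {0,…,d} with k₁ + ⋯ + kₙ = ℓ ≤ d. Then the iterated partial derivative ∂^{k₁+⋯+kₙ}(det M)/∂x₁^{k₁}⋯∂xₙ^{kₙ}, evaluated at x₁ = ⋯ = xₙ = 0, equals (k₁!⋯kₙ!) times the generalized mixed discriminant sum Σ_φ det(M_φ), where the sum ranges over all functions φ : {1,…,d} → {0,1,…,n} such that |φ⁻¹(i)| = kᵢ for each i = 1,…,n (so |φ⁻¹(0)| = d − ℓ), and M_φ is the d×d matrix whose j-th row is the j-th row of A_{φ(j)}. -/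

import Mathlib

open Matrix MvPolynomial

/-- exponent count of a row assignment -/
private noncomputable def cnt {n d : ℕ} (φ : Fin d → Option (Fin n)) : Fin n →₀ ℕ :=
  Finsupp.equivFunOnFinite.symm fun i => (Finset.univ.filter fun j : Fin d => φ j = some i).card

private lemma iter_pderiv_monomial {n : ℕ} (i : Fin n) (t : ℕ) (m : Fin n →₀ ℕ) (c : ℂ) :
    (fun q => MvPolynomial.pderiv i q)^[t] (monomial m c)
      = monomial (m - Finsupp.single i t) (c * ((m i).descFactorial t : ℂ)) := by
  induction t with
  | zero => simp
  | succ t ih =>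
      rw [Function.iterate_succ_apply', ih, pderiv_monomial]
      have h1 : m - Finsupp.single i t - Finsupp.single i 1 = m - Finsupp.single i (t + 1) := by
        rw [tsub_tsub, ← Finsupp.single_add]
      have h2 : (m - Finsupp.single i t) i = m i - t := by simp
      rw [h1, h2, Nat.descFactorial_succ]
      congr 1
      push_cast
      ring

private lemma foldl_iter {n : ℕ} (k : Fin n → ℕ) :
    ∀ (L : List (Fin n)), L.Nodup → ∀ (m : Fin n →₀ ℕ) (c : ℂ),
    L.foldl (fun p i => (fun q => MvPolynomial.pderiv i q)^[k i] p) (monomial m c)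
      = monomial (m - ∑ i ∈ L.toFinset, Finsupp.single i (k i))
          (c * ∏ i ∈ L.toFinset, ((m i).descFactorial (k i) : ℂ))
  | [], _, m, c => by simp
  | (a :: L), hnd, m, c => by
      have hnd' : L.Nodup := (List.nodup_cons.mp hnd).2
      have ha : a ∉ L := (List.nodup_cons.mp hnd).1
      rw [List.foldl_cons, iter_pderiv_monomial, foldl_iter k L hnd']
      have hmem : ∀ i ∈ L.toFinset, (m - Finsupp.single a (k a)) i = m i := by
        intro i hi
        have : i ≠ a := by rintro rfl; exact ha (List.mem_toFinset.mp hi)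
        simp [Finsupp.single_apply, this.symm]
      rw [List.toFinset_cons, Finset.sum_insert (by simpa using ha),
        Finset.prod_insert (by simpa using ha)]
      congr 1
      · rw [tsub_tsub]
      · rw [Finset.prod_congr rfl fun i hi => by rw [hmem i hi]]
        ring

private lemma sum_single_apply {n : ℕ} (k : Fin n → ℕ) (j : Fin n) :
    (∑ i : Fin n, Finsupp.single i (k i)) j = k j := by
  rw [Finsupp.finset_sum_apply]
  simp [Finsupp.single_apply]

private lemma eval0_foldl {n : ℕ} (k : Fin n → ℕ) (m : Fin n →₀ ℕ) (c : ℂ) :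
    MvPolynomial.eval (0 : Fin n → ℂ)
      ((List.finRange n).foldl (fun p i => (fun q => MvPolynomial.pderiv i q)^[k i] p)
        (monomial m c))
    = if ∀ i, m i = k i then c * ∏ i, ((k i).factorial : ℂ) else 0 := by
  rw [foldl_iter k _ (List.nodup_finRange n)]
  simp only [List.toFinset_finRange]
  rw [eval_zero, constantCoeff_monomial]
  by_cases h : ∀ i, m i = k i
  · have hm0 : m - ∑ i, Finsupp.single i (k i) = 0 := by
      ext j
      rw [Finsupp.tsub_apply, sum_single_apply, h j]
      simp
    rw [if_pos hm0, if_pos h]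
    congr 1
    exact Finset.prod_congr rfl fun i _ => by rw [h i, Nat.descFactorial_self]
  · rw [if_neg h]
    push_neg at h
    obtain ⟨i, hi⟩ := h
    rcases lt_or_gt_of_ne hi with hlt | hgt
    · have : ((m i).descFactorial (k i) : ℂ) = 0 := by
        norm_cast
        exact Nat.descFactorial_eq_zero_iff_lt.mpr hlt
      rw [Finset.prod_eq_zero (Finset.mem_univ i) this]
      simp
    · have : m - ∑ i, Finsupp.single i (k i) ≠ 0 := by
        intro h0
        have := congrArg (fun f => f i) h0
        simp only [Finsupp.tsub_apply, sum_single_apply, Finsupp.coe_zero, Pi.zero_apply] at this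
        omega
      rw [if_neg this]

private lemma monomial_cnt_eq {n d : ℕ} (φ : Fin d → Option (Fin n)) (c : ℂ) :
    (monomial (cnt φ) c : MvPolynomial (Fin n) ℂ)
      = (∏ j : Fin d, (φ j).elim (1 : MvPolynomial (Fin n) ℂ) X) * C c := by
  have h1 : (∏ j : Fin d, (φ j).elim (1 : MvPolynomial (Fin n) ℂ) X)
      = ∏ o : Option (Fin n),
          ∏ j ∈ Finset.univ.filter (fun j : Fin d => φ j = o),
            (o.elim (1 : MvPolynomial (Fin n) ℂ) X) := by
    rw [Finset.prod_fiberwise' Finset.univ φ]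
  rw [h1, Fintype.prod_option]
  simp only [Option.elim, Finset.prod_const, one_pow, one_mul]
  rw [monomial_eq, Finsupp.prod_fintype _ _ (fun i => pow_zero _)]
  rw [mul_comm]
  congr 1

private lemma det_decomp {n d : ℕ} (A₀ : Matrix (Fin d) (Fin d) ℂ)
    (A : Fin n → Matrix (Fin d) (Fin d) ℂ) :
    Matrix.det (A₀.map MvPolynomial.C +
        ∑ i : Fin n, (MvPolynomial.X i : MvPolynomial (Fin n) ℂ) • (A i).map MvPolynomial.C)
      = ∑ φ : Fin d → Option (Fin n),
          monomial (cnt φ)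
            (Matrix.det (Matrix.of fun j l : Fin d => (φ j).elim (A₀ j l) fun i => A i j l)) := by
  classical
  set w : Option (Fin n) → MvPolynomial (Fin n) ℂ := fun o => o.elim 1 X with hw
  set B : Option (Fin n) → Matrix (Fin d) (Fin d) ℂ := fun o => o.elim A₀ A with hB
  have hM : (A₀.map MvPolynomial.C +
      ∑ i : Fin n, (MvPolynomial.X i : MvPolynomial (Fin n) ℂ) • (A i).map MvPolynomial.C :
        Matrix (Fin d) (Fin d) (MvPolynomial (Fin n) ℂ))
      = Matrix.of fun j : Fin d => ∑ o : Option (Fin n), w o • fun l : Fin d => MvPolynomial.C (B o j l) := by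
    refine Matrix.ext fun j l => ?_
    rw [Matrix.add_apply, Matrix.sum_apply]
    show _ = (∑ o : Option (Fin n), w o • fun l : Fin d => MvPolynomial.C (B o j l)) l
    rw [Finset.sum_apply, Fintype.sum_option]
    simp [w, B, Matrix.smul_apply, Matrix.map_apply, smul_eq_mul]
  rw [hM]
  show (Matrix.detRowAlternating
    (fun j : Fin d => ∑ o : Option (Fin n), w o • fun l : Fin d => MvPolynomial.C (B o j l))) = _
  have hms := (Matrix.detRowAlternating (R := MvPolynomial (Fin n) ℂ)
      (n := Fin d)).toMultilinearMap.map_sum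
      (g := fun j o => w o • fun l : Fin d => MvPolynomial.C (B o j l))
  simp only [AlternatingMap.coe_multilinearMap] at hms
  rw [hms]
  refine Finset.sum_congr rfl fun φ _ => ?_
  have := (Matrix.detRowAlternating (R := MvPolynomial (Fin n) ℂ)
      (n := Fin d)).toMultilinearMap.map_smul_univ (fun j => w (φ j))
      (fun j => fun l : Fin d => MvPolynomial.C (B (φ j) j l))
  simp only [AlternatingMap.coe_multilinearMap] at this
  rw [this]
  have hdet : (Matrix.detRowAlternating (R := MvPolynomial (Fin n) ℂ) (n := Fin d))
        (fun j => fun l : Fin d => MvPolynomial.C (B (φ j) j l))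
      = MvPolynomial.C
          (Matrix.det (Matrix.of fun j l : Fin d => (φ j).elim (A₀ j l) fun i => A i j l)) := by
    rw [(MvPolynomial.C : ℂ →+* MvPolynomial (Fin n) ℂ).map_det]
    have hmat : (fun j => fun l : Fin d => MvPolynomial.C (B (φ j) j l))
        = (MvPolynomial.C : ℂ →+* MvPolynomial (Fin n) ℂ).mapMatrix
            (Matrix.of fun j l : Fin d => (φ j).elim (A₀ j l) fun i => A i j l) := by
      funext j l
      show MvPolynomial.C (B (φ j) j l) = MvPolynomial.C ((φ j).elim (A₀ j l) fun i => A i j l)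
      cases φ j <;> rfl
    rw [show (Matrix.detRowAlternating (R := MvPolynomial (Fin n) ℂ) (n := Fin d))
        (fun j => fun l : Fin d => MvPolynomial.C (B (φ j) j l))
      = Matrix.det ((MvPolynomial.C : ℂ →+* MvPolynomial (Fin n) ℂ).mapMatrix
            (Matrix.of fun j l : Fin d => (φ j).elim (A₀ j l) fun i => A i j l)) from by
      rw [← hmat]; rfl]
  rw [hdet, monomial_cnt_eq, smul_eq_mul]

private lemma iter_pderiv_sum {n : ℕ} (a : Fin n) (t : ℕ) {α : Type*} (s : Finset α)
    (f : α → MvPolynomial (Fin n) ℂ) :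
    (fun q => MvPolynomial.pderiv a q)^[t] (∑ x ∈ s, f x)
      = ∑ x ∈ s, (fun q => MvPolynomial.pderiv a q)^[t] (f x) := by
  induction t with
  | zero => simp
  | succ t ih =>
      rw [Function.iterate_succ_apply', ih, map_sum]
      exact Finset.sum_congr rfl fun x _ => by rw [Function.iterate_succ_apply']

private lemma foldl_sum {n : ℕ} (k : Fin n → ℕ) {α : Type*} :
    ∀ (L : List (Fin n)) (s : Finset α) (f : α → MvPolynomial (Fin n) ℂ),
    L.foldl (fun p i => (fun q => MvPolynomial.pderiv i q)^[k i] p) (∑ x ∈ s, f x)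
      = ∑ x ∈ s, L.foldl (fun p i => (fun q => MvPolynomial.pderiv i q)^[k i] p) (f x)
  | [], s, f => by simp
  | (a :: L), s, f => by
      rw [List.foldl_cons, iter_pderiv_sum, foldl_sum k L]
      rfl

/-- Lemma 2.3 (paper): for a linear matrix polynomial `M(x) = A₀ + x₁ A₁ + ⋯ + xₙ Aₙ` of
size `d` and exponents `k₁, …, kₙ ≤ d` with `k₁ + ⋯ + kₙ = ℓ ≤ d`, the iterated partial
derivative `∂^{k₁+⋯+kₙ}(det M)/∂x₁^{k₁}⋯∂xₙ^{kₙ}` evaluated at `0` equals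
`k₁!⋯kₙ!` times the generalized mixed discriminant
`D̂(A₀,…,A₀ (d−ℓ times), A₁,…,A₁ (k₁ times), …, Aₙ,…,Aₙ (kₙ times))`, expressed as the sum
over row-assignments `φ : Fin d → Option (Fin n)` with `|φ⁻¹ i| = kᵢ` of the determinant of
the matrix whose `j`-th row is the `j`-th row of `A_{φ j}` (of `A₀` if `φ j = none`). -/
theorem iterated_pderiv_det_eq_generalized_mixed_discriminant (n d : ℕ)
    (A₀ : Matrix (Fin d) (Fin d) ℂ) (A : Fin n → Matrix (Fin d) (Fin d) ℂ)
    (k : Fin n → ℕ) (ℓ : ℕ) (hk : ∀ i, k i ≤ d) (hsum : ∑ i, k i = ℓ) (hℓ : ℓ ≤ d) :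
    MvPolynomial.eval (0 : Fin n → ℂ)
      ((List.finRange n).foldl
        (fun p i => (fun q => MvPolynomial.pderiv i q)^[k i] p)
        (Matrix.det (A₀.map MvPolynomial.C +
          ∑ i : Fin n, (MvPolynomial.X i : MvPolynomial (Fin n) ℂ) • (A i).map MvPolynomial.C))) =
    (∏ i : Fin n, (Nat.factorial (k i) : ℂ)) *
      ∑ φ ∈ Finset.univ.filter
          (fun φ : Fin d → Option (Fin n) =>
            ∀ i : Fin n, (Finset.univ.filter (fun j : Fin d => φ j = some i)).card = k i),
        Matrix.det (Matrix.of fun j l : Fin d => (φ j).elim (A₀ j l) (fun i => A i j l)) := by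
  classical
  rw [det_decomp, foldl_sum, map_sum]
  have hterm : ∀ φ : Fin d → Option (Fin n),
      MvPolynomial.eval (0 : Fin n → ℂ)
        ((List.finRange n).foldl (fun p i => (fun q => MvPolynomial.pderiv i q)^[k i] p)
          (monomial (cnt φ)
            (Matrix.det (Matrix.of fun j l : Fin d => (φ j).elim (A₀ j l) fun i => A i j l))))
      = if (∀ i : Fin n, (Finset.univ.filter (fun j : Fin d => φ j = some i)).card = k i)
          then (Matrix.det (Matrix.of fun j l : Fin d => (φ j).elim (A₀ j l) fun i => A i j l)) *
            ∏ i, ((k i).factorial : ℂ)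
          else 0 := by
    intro φ
    rw [eval0_foldl]
    exact if_congr (by simp [cnt]) rfl rfl
  rw [Finset.sum_congr rfl fun φ _ => hterm φ, ← Finset.sum_filter, Finset.mul_sum]
  exact Finset.sum_congr (by congr) fun φ _ => mul_comm _ _
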